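/- Let q ≥ 2 be an integer, let F_q denote the set of functions f : ℕ → ℤ such that qⁿ ∣ (Δⁿf)(x) for all n ≥ 0 and all x ≥ 0, and let b, g₁, …, g_q ∈ F_q. Define r(x) = b(x) · ⟨g₁, …, g_q⟩(x) (which lies in F_q). Then for every m ≥ 0, ε_m^r ≡ Σ_{i₁+⋯+i_q+k=m} (m!/(i₁!⋯i_q!k!)) · ε_k^b · (ε_{i₁}^{g₁}⋯ε_{i_q}^{g_q} + ε_{i₁+1}^{g₁}ε_{i₂}^{g₂}⋯ε_{i_q}^{g_q} + ⋯ + ε_{i₁}^{g₁}⋯ε_{i_{q−1}}^{g_{q−1}}ε_{i_q+1}^{g_q}) (mod q), where the parenthesized expression has q+1 terms: one with indices i₁, …, i_q, and q terms each with exactly one index incremented by 1. -/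

import Mathlib

/-- The finite difference operator: `(Δ f)(x) = f(x+1) - f(x)`. -/
def delta (f : ℕ → ℤ) : ℕ → ℤ := fun x => f (x + 1) - f x

/-- Membership in the set `F_q` of functions `f : ℕ → ℤ` with `q^n ∣ (Δ^n f)(x)`
for all `n` and `x`. -/
def memFq (q : ℕ) (f : ℕ → ℤ) : Prop :=
  ∀ (n : ℕ) (x : ℕ), (q : ℤ) ^ n ∣ (delta^[n] f) x

/-- For `f ∈ F_q`, `epsq q f n` is (a representative in `[0, q)` of) the element of
`ℤ/qℤ` with `(Δ^n f)(x) ≡ epsq q f n · q^n (mod q^(n+1))` for all `x` (the value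
is independent of `x`; we read it off at `x = 0`). -/
def epsq (q : ℕ) (f : ℕ → ℤ) (n : ℕ) : ℤ := ((delta^[n] f) 0 / (q : ℤ) ^ n) % (q : ℤ)

namespace EpsAux

/-- exact quotient of the n-th difference at 0 -/
def Dv (q : ℕ) (f : ℕ → ℤ) (n : ℕ) : ℤ := (delta^[n] f) 0 / (q : ℤ) ^ n
open Finset

lemma iter_succ' (f : ℕ → ℤ) (n x : ℕ) :
    delta^[n+1] f x = delta^[n] f (x+1) - delta^[n] f x := by
  rw [Function.iterate_succ_apply']; rfl

lemma iter_add (f g : ℕ → ℤ) (n : ℕ) : ∀ x,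
    delta^[n] (fun y => f y + g y) x = delta^[n] f x + delta^[n] g x := by
  induction n generalizing f g with
  | zero => intro x; rfl
  | succ n ih =>
    intro x
    rw [Function.iterate_succ_apply]
    have : delta (fun y => f y + g y) = fun y => delta f y + delta g y := by
      funext y; simp [delta]; ring
    rw [this, ih, ← Function.iterate_succ_apply, ← Function.iterate_succ_apply]

lemma iter_sum {ι : Type*} (s : Finset ι) (f : ι → ℕ → ℤ) (n : ℕ) : ∀ x,
    delta^[n] (fun y => ∑ i ∈ s, f i y) x = ∑ i ∈ s, delta^[n] (f i) x := by
  classical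
  induction s using Finset.induction_on with
  | empty =>
    intro x
    simp only [Finset.sum_empty]
    induction n generalizing x with
    | zero => rfl
    | succ n ih => rw [iter_succ', ih, ih]; ring
  | insert a s hnotmem ih =>
    intro x
    simp only [Finset.sum_insert hnotmem]
    rw [iter_add (f _) (fun y => ∑ i ∈ _, f i y), ih]

lemma iter_shift (f : ℕ → ℤ) (n : ℕ) : ∀ x,
    delta^[n] (fun y => f (y+1)) x = delta^[n] f (x+1) := by
  induction n generalizing f with
  | zero => intro x; rfl
  | succ n ih =>
    intro x
    rw [Function.iterate_succ_apply, Function.iterate_succ_apply]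
    have : delta (fun y => f (y+1)) = fun y => delta f (y+1) := by
      funext y; simp [delta]
    rw [this, ih]


lemma delta_mul (f g : ℕ → ℤ) (x : ℕ) :
    delta (fun y => f y * g y) x = delta f x * g (x+1) + f x * delta g x := by
  simp [delta]; ring

lemma leibniz (m : ℕ) : ∀ (f g : ℕ → ℤ) (x : ℕ),
    delta^[m] (fun y => f y * g y) x =
      ∑ k ∈ range (m+1), (m.choose k : ℤ) * (delta^[k] f x * delta^[m-k] g (x+k)) := by
  induction m with
  | zero => intro f g x; simp
  | succ m ih =>
    intro f g x
    have h1 : delta^[m+1] (fun y => f y * g y) x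
        = delta^[m] (fun y => delta f y * g (y+1)) x
          + delta^[m] (fun y => f y * delta g y) x := by
      have hfun : (delta fun y => f y * g y) = fun y => delta f y * g (y+1) + f y * delta g y :=
        funext (delta_mul f g)
      rw [Function.iterate_succ_apply, hfun, iter_add]
    rw [h1, ih, ih]
    set t : ℕ → ℤ := fun k => delta^[k] f x * delta^[m+1-k] g (x+k) with ht
    have e1 : ∀ k ∈ range (m+1),
        (m.choose k : ℤ) * (delta^[k] (delta f) x * delta^[m-k] (fun y => g (y+1)) (x+k))
          = (m.choose k : ℤ) * t (k+1) := by
      intro k hk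
      show _ = (m.choose k : ℤ) * (delta^[k+1] f x * delta^[m+1-(k+1)] g (x+(k+1)))
      rw [iter_shift, Function.iterate_succ_apply, Nat.succ_sub_succ, ← add_assoc]
    have e2 : ∀ k ∈ range (m+1),
        (m.choose k : ℤ) * (delta^[k] f x * delta^[m-k] (delta g) (x+k))
          = (m.choose k : ℤ) * t k := by
      intro k hk
      have hk' : k ≤ m := Nat.lt_succ_iff.mp (mem_range.mp hk)
      have h2 : (m - k).succ = m + 1 - k := by omega
      show _ = (m.choose k : ℤ) * (delta^[k] f x * delta^[m+1-k] g (x+k))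
      rw [← Function.iterate_succ_apply, h2]
    rw [Finset.sum_congr rfl e1, Finset.sum_congr rfl e2]
    have expand : ∑ k ∈ range (m+2), ((m+1).choose k : ℤ) * t k
        = ∑ k ∈ range (m+1), (m.choose k : ℤ) * t (k+1)
          + (∑ k ∈ range (m+1), (m.choose (k+1) : ℤ) * t (k+1) + t 0) := by
      rw [Finset.sum_range_succ' (fun k => (((m+1).choose k : ℕ) : ℤ) * t k) (m+1)]
      simp only [Nat.choose_succ_succ, Nat.choose_zero_right, Nat.cast_add, Nat.cast_one,
        add_mul, one_mul, Nat.cast_ofNat]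
      rw [Finset.sum_add_distrib]
      push_cast
      ring
    have collapse : ∑ k ∈ range (m+1), (m.choose (k+1) : ℤ) * t (k+1) + t 0
        = ∑ k ∈ range (m+1), (m.choose k : ℤ) * t k := by
      rw [Finset.sum_range_succ (fun k => (m.choose (k+1) : ℤ) * t (k+1)) m,
        Finset.sum_range_succ' (fun k => (m.choose k : ℤ) * t k) m]
      simp [Nat.choose_succ_self]
    rw [expand, collapse]


lemma memFq_rep {q : ℕ} {f : ℕ → ℤ} (hf : memFq q f) (n : ℕ) : ∀ x,
    (q:ℤ)^(n+1) ∣ delta^[n] f x - (q:ℤ)^n * Dv q f n := by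
  intro x
  induction x with
  | zero =>
    have : (q:ℤ)^n * Dv q f n = delta^[n] f 0 := Int.mul_ediv_cancel' (hf n 0)
    rw [this]; simp
  | succ x ih =>
    have h3 : delta^[n] f (x+1) - (q:ℤ)^n * Dv q f n
        = (delta^[n] f x - (q:ℤ)^n * Dv q f n) + delta^[n+1] f x := by
      rw [iter_succ']; ring
    rw [h3]
    exact dvd_add ih (hf (n+1) x)

lemma multinomial_map {α β : Type*} (e : α ↪ β) (s : Finset α) (f : β → ℕ) :
    Nat.multinomial (s.map e) f = Nat.multinomial s (fun a => f (e a)) := by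
  unfold Nat.multinomial
  rw [Finset.sum_map, Finset.prod_map]

lemma multinomial_cons_fin (s : ℕ) (k : ℕ) (a : Fin s → ℕ) :
    Nat.multinomial Finset.univ (Fin.cons k a : Fin (s+1) → ℕ)
      = (k + ∑ t, a t).choose k * Nat.multinomial Finset.univ a := by
  rw [Fin.univ_succ, Nat.multinomial_cons, Fin.cons_zero, Finset.sum_map, multinomial_map]
  simp only [Function.Embedding.coeFn_mk, Fin.cons_succ]

lemma sum_adT_succ {M : Type*} [AddCommMonoid M] (s m : ℕ) (φ : (Fin (s+1) → ℕ) → M) :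
    ∑ a ∈ Finset.Nat.antidiagonalTuple (s+1) m, φ a
      = ∑ p ∈ Finset.HasAntidiagonal.antidiagonal m,
          ∑ a ∈ Finset.Nat.antidiagonalTuple s p.2, φ (Fin.cons p.1 a) := by
  rw [← Finset.sum_sigma (Finset.HasAntidiagonal.antidiagonal m)
      (fun p => Finset.Nat.antidiagonalTuple s p.2) (fun x => φ (Fin.cons x.1.1 x.2))]
  apply Finset.sum_nbij' (i := fun a => ⟨(a 0, ∑ t : Fin s, a (Fin.succ t)), Fin.tail a⟩)
    (j := fun x => Fin.cons x.1.1 x.2)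
  · intro a ha
    rw [Finset.Nat.mem_antidiagonalTuple, Fin.sum_univ_succ] at ha
    rw [Finset.mem_sigma, Finset.HasAntidiagonal.mem_antidiagonal, Finset.Nat.mem_antidiagonalTuple]
    exact ⟨ha, rfl⟩
  · intro x hx
    rw [Finset.mem_sigma, Finset.HasAntidiagonal.mem_antidiagonal, Finset.Nat.mem_antidiagonalTuple] at hx
    rw [Finset.Nat.mem_antidiagonalTuple, Fin.sum_univ_succ, Fin.cons_zero]
    simp only [Fin.cons_succ]
    rw [hx.2, hx.1]
  · intro a _
    exact Fin.cons_self_tail a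
  · intro x hx
    rw [Finset.mem_sigma, Finset.HasAntidiagonal.mem_antidiagonal, Finset.Nat.mem_antidiagonalTuple] at hx
    refine Sigma.ext ?_ ?_
    · simp only [Fin.cons_zero, Fin.cons_succ, Prod.mk.injEq]
      exact Prod.ext rfl (by simp [Fin.cons_succ, hx.2])
    · simp [Fin.tail_cons]
  · intro a _
    simp [Fin.cons_self_tail]


lemma prodFq (q : ℕ) (hq : 2 ≤ q) : ∀ (s : ℕ) (f : Fin s → ℕ → ℤ), (∀ t, memFq q (f t)) →
    ∀ (m x : ℕ),
    (q:ℤ)^(m+1) ∣ delta^[m] (fun y => ∏ t, f t y) x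
      - (q:ℤ)^m * ∑ a ∈ Finset.Nat.antidiagonalTuple s m,
          (Nat.multinomial Finset.univ a : ℤ) * ∏ t, Dv q (f t) (a t) := by
  intro s
  induction s with
  | zero =>
    intro f _ m x
    have hconst : (fun y : ℕ => ∏ t : Fin 0, f t y) = fun _ => (1:ℤ) := by
      funext y; simp
    rw [hconst]
    match m with
    | 0 =>
      simp [Finset.Nat.antidiagonalTuple, Nat.multinomial]
    | m+1 =>
      have h0 : ∀ (k x : ℕ), delta^[k] (fun _ => (1:ℤ)) x = if k = 0 then 1 else 0 := by
        intro k
        induction k with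
        | zero => intro x; rfl
        | succ k ih => intro x; rw [iter_succ', ih, ih]; simp
      rw [h0]
      have hempty : Finset.Nat.antidiagonalTuple 0 (m+1) = ∅ := by
        rw [Finset.eq_empty_iff_forall_notMem]
        intro a ha
        rw [Finset.Nat.mem_antidiagonalTuple] at ha
        simp at ha
      rw [hempty]
      simp
  | succ s ih =>
    intro f hf m x
    have hsplit : (fun y : ℕ => ∏ t : Fin (s+1), f t y)
        = fun y => f 0 y * ∏ t : Fin s, f t.succ y := by
      funext y; rw [Fin.prod_univ_succ]
    rw [hsplit, leibniz,
      ← Finset.Nat.sum_antidiagonal_eq_sum_range_succ_mk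
        (fun p => (m.choose p.1 : ℤ) *
          (delta^[p.1] (f 0) x * delta^[p.2] (fun y => ∏ t : Fin s, f t.succ y) (x+p.1))) m,
      sum_adT_succ s m
        (fun a => (Nat.multinomial Finset.univ a : ℤ) * ∏ t : Fin (s+1), Dv q (f t) (a t))]
    -- rewrite the inner tuple sums
    have hinner : ∀ p ∈ Finset.HasAntidiagonal.antidiagonal m,
        ∑ a ∈ Finset.Nat.antidiagonalTuple s p.2,
            (Nat.multinomial Finset.univ (Fin.cons p.1 a : Fin (s+1) → ℕ) : ℤ) *
              ∏ t : Fin (s+1), Dv q (f t) ((Fin.cons p.1 a : Fin (s+1) → ℕ) t)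
          = (m.choose p.1 : ℤ) * (Dv q (f 0) p.1 *
              ∑ a ∈ Finset.Nat.antidiagonalTuple s p.2,
                (Nat.multinomial Finset.univ a : ℤ) * ∏ t : Fin s, Dv q (f t.succ) (a t)) := by
      intro p hp
      rw [Finset.mul_sum, Finset.mul_sum]
      apply Finset.sum_congr rfl
      intro a ha
      rw [Finset.Nat.mem_antidiagonalTuple] at ha
      rw [Finset.HasAntidiagonal.mem_antidiagonal] at hp
      rw [multinomial_cons_fin, Fin.prod_univ_succ, Fin.cons_zero, ha, hp]
      simp only [Fin.cons_succ]
      push_cast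
      ring
    rw [Finset.sum_congr rfl hinner, Finset.mul_sum, ← Finset.sum_sub_distrib]
    apply Finset.dvd_sum
    intro p hp
    rw [Finset.HasAntidiagonal.mem_antidiagonal] at hp
    obtain ⟨k, l⟩ := p
    simp only at hp ⊢
    subst hp
    set G : ℕ → ℤ := fun y => ∏ t : Fin s, f t.succ y with hG
    set S : ℤ := ∑ a ∈ Finset.Nat.antidiagonalTuple s l,
        (Nat.multinomial Finset.univ a : ℤ) * ∏ t : Fin s, Dv q (f t.succ) (a t) with hS
    set A : ℤ := delta^[k] (f 0) x with hA
    set B : ℤ := delta^[l] G (x+k) with hB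
    set D : ℤ := Dv q (f 0) k with hD
    have h1 : (q:ℤ)^(k+1) ∣ A - (q:ℤ)^k * D := memFq_rep (hf 0) k x
    have h2 : (q:ℤ)^(l+1) ∣ B - (q:ℤ)^l * S := ih (fun t => f t.succ) (fun t => hf t.succ) l (x+k)
    have h3 : (q:ℤ)^l ∣ B := by
      have : B = (B - (q:ℤ)^l * S) + (q:ℤ)^l * S := by ring
      rw [this]
      exact dvd_add (dvd_trans (pow_dvd_pow _ (Nat.le_succ l)) h2) (Dvd.intro _ rfl)
    have key : ((k+l).choose k : ℤ) * (A * B) - (q:ℤ)^(k+l) * (((k+l).choose k : ℤ) * (D * S))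
        = ((k+l).choose k : ℤ) * ((A - (q:ℤ)^k * D) * B + ((q:ℤ)^k * D) * (B - (q:ℤ)^l * S)) := by
      rw [pow_add]; ring
    rw [key]
    apply Dvd.dvd.mul_left
    apply dvd_add
    · have := mul_dvd_mul h1 h3
      have hpow : (q:ℤ)^(k+1) * (q:ℤ)^l = (q:ℤ)^(k+l+1) := by
        rw [← pow_add]; ring_nf
      rwa [hpow] at this
    · have := mul_dvd_mul (dvd_mul_right ((q:ℤ)^k) D) h2
      have hpow : (q:ℤ)^k * (q:ℤ)^(l+1) = (q:ℤ)^(k+l+1) := by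
        rw [← pow_add]; ring_nf
      rwa [hpow] at this


lemma tilde_iter {q : ℕ} (hq : 0 < q) {g : ℕ → ℤ} (hg : memFq q g) (n : ℕ) : ∀ x,
    delta^[n] (fun y => delta g y / (q:ℤ)) x = delta^[n+1] g x / (q:ℤ) := by
  have hq0 : (q:ℤ) ≠ 0 := by exact_mod_cast hq.ne'
  induction n with
  | zero => intro x; rfl
  | succ n ih =>
    intro x
    rw [iter_succ', ih, ih, iter_succ' g (n+1) x]
    obtain ⟨c, hc⟩ : (q:ℤ) ∣ delta^[n+1] g (x+1) :=
      dvd_trans (dvd_pow_self _ (Nat.succ_ne_zero n)) (hg (n+1) (x+1))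
    obtain ⟨d, hd⟩ : (q:ℤ) ∣ delta^[n+1] g x :=
      dvd_trans (dvd_pow_self _ (Nat.succ_ne_zero n)) (hg (n+1) x)
    rw [hc, hd, Int.mul_ediv_cancel_left _ hq0, Int.mul_ediv_cancel_left _ hq0, ← mul_sub,
      Int.mul_ediv_cancel_left _ hq0]

lemma tilde_memFq {q : ℕ} (hq : 0 < q) {g : ℕ → ℤ} (hg : memFq q g) :
    memFq q (fun y => delta g y / (q:ℤ)) := by
  intro n x
  have hq0 : (q:ℤ) ≠ 0 := by exact_mod_cast hq.ne'
  rw [tilde_iter hq hg]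
  obtain ⟨c, hc⟩ := hg (n+1) x
  have h1 : (q:ℤ)^(n+1) * c = (q:ℤ) * ((q:ℤ)^n * c) := by ring
  rw [hc, h1, Int.mul_ediv_cancel_left _ hq0]
  exact dvd_mul_right _ _

lemma tilde_Dv {q : ℕ} (hq : 0 < q) {g : ℕ → ℤ} (hg : memFq q g) (n : ℕ) :
    Dv q (fun y => delta g y / (q:ℤ)) n = Dv q g (n+1) := by
  have hq0 : (q:ℤ) ≠ 0 := by exact_mod_cast hq.ne'
  unfold Dv
  rw [tilde_iter hq hg]
  obtain ⟨c, hc⟩ := hg (n+1) 0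
  have h1 : (q:ℤ)^(n+1) * c = (q:ℤ) * ((q:ℤ)^n * c) := by ring
  rw [hc, h1, Int.mul_ediv_cancel_left _ hq0, Int.mul_ediv_cancel_left _ (pow_ne_zero n hq0),
    ← h1, Int.mul_ediv_cancel_left _ (pow_ne_zero (n+1) hq0)]

lemma dvd_combo {ι : Type*} (s : Finset ι) (Q c A0 B0 : ℤ) (A B : ι → ℤ)
    (h0 : Q ∣ A0 - c * B0) (hi : ∀ i ∈ s, Q ∣ A i - c * B i) :
    Q ∣ (A0 + ∑ i ∈ s, A i) - c * (B0 + ∑ i ∈ s, B i) := by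
  have h : (A0 + ∑ i ∈ s, A i) - c * (B0 + ∑ i ∈ s, B i)
      = (A0 - c * B0) + ∑ i ∈ s, (A i - c * B i) := by
    rw [Finset.sum_sub_distrib, ← Finset.mul_sum]; ring
  rw [h]
  exact dvd_add h0 (Finset.dvd_sum hi)

lemma epsq_eq (q : ℕ) (f : ℕ → ℤ) (n : ℕ) : epsq q f n = Dv q f n % (q:ℤ) := rfl

end EpsAux

open Finset EpsAux

/-- The recursion for `ε_m` of `r(x) = b(x) · ⟨g₁, …, g_q⟩(x)` modulo `q`. -/
theorem epsilon_recursion_q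
    (q : ℕ) (hq : 2 ≤ q)
    (b : ℕ → ℤ) (g : Fin q → ℕ → ℤ)
    (hb : memFq q b) (hg : ∀ i, memFq q (g i))
    (r : ℕ → ℤ)
    (hr : ∀ x : ℕ, r x = b x *
      ((∑ i : Fin q, g i (x + 1) * ∏ j ∈ Finset.univ.erase i, g j x) / (q : ℤ)))
    (m : ℕ) :
    epsq q r m ≡
      ∑ a ∈ Finset.Nat.antidiagonalTuple (q + 1) m,
        (Nat.multinomial Finset.univ a : ℤ) * epsq q b (a (Fin.last q)) *
          ((∏ i : Fin q, epsq q (g i) (a i.castSucc)) +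
            ∑ i : Fin q, epsq q (g i) (a i.castSucc + 1) *
              ∏ j ∈ Finset.univ.erase i, epsq q (g j) (a j.castSucc))
      [ZMOD (q : ℤ)] := by
  classical
  have hqpos : 0 < q := by omega
  have hq0 : (q:ℤ) ≠ 0 := by exact_mod_cast hqpos.ne'
  set gt : Fin q → ℕ → ℤ := fun i => fun y => delta (g i) y / (q:ℤ) with hgt
  -- decomposition of r into a sum of q+1 products of F_q functions
  have hrdec : r = fun x => (b x * ∏ j, g j x)
      + ∑ i, b x * (gt i x * ∏ j ∈ Finset.univ.erase i, g j x) := by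
    funext x
    rw [hr x]
    have hgx : ∀ i : Fin q, g i (x+1) = g i x + (q:ℤ) * gt i x := by
      intro i
      have hdvd : (q:ℤ) ∣ delta (g i) x := by
        have h := hg i 1 x
        simpa using h
      have hqd : (q:ℤ) * (delta (g i) x / (q:ℤ)) = delta (g i) x := Int.mul_ediv_cancel' hdvd
      simp only [hgt]
      rw [hqd]
      simp [delta]
    have hs : ∑ i : Fin q, g i (x + 1) * ∏ j ∈ Finset.univ.erase i, g j x
        = (q:ℤ) * ((∏ j, g j x) + ∑ i, gt i x * ∏ j ∈ Finset.univ.erase i, g j x) := by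
      calc ∑ i : Fin q, g i (x+1) * ∏ j ∈ univ.erase i, g j x
          = ∑ i : Fin q, ((∏ j, g j x)
              + (q:ℤ) * (gt i x * ∏ j ∈ univ.erase i, g j x)) := by
            apply Finset.sum_congr rfl
            intro i _
            rw [hgx i, ← Finset.mul_prod_erase univ (fun j => g j x) (Finset.mem_univ i)]
            ring
        _ = (q:ℤ) * ((∏ j, g j x) + ∑ i, gt i x * ∏ j ∈ univ.erase i, g j x) := by
            rw [Finset.sum_add_distrib, Finset.sum_const, ← Finset.mul_sum, Finset.card_univ,
              Fintype.card_fin, nsmul_eq_mul]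
            ring
    rw [hs, Int.mul_ediv_cancel_left _ hq0, mul_add, Finset.mul_sum]
  -- the families of q+1 functions
  set F0 : Fin (q+1) → ℕ → ℤ := Fin.snoc g b with hF0
  set Fi : Fin q → Fin (q+1) → ℕ → ℤ :=
    fun i => Fin.snoc (Function.update g i (gt i)) b with hFi
  have hF0mem : ∀ t, memFq q (F0 t) := by
    refine Fin.lastCases ?_ ?_
    · simpa only [hF0, Fin.snoc_last] using hb
    · intro j; simpa only [hF0, Fin.snoc_castSucc] using hg j
  have hFimem : ∀ i t, memFq q (Fi i t) := by
    intro i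
    refine Fin.lastCases ?_ ?_
    · simpa only [hFi, Fin.snoc_last] using hb
    · intro j
      simp only [hFi, Fin.snoc_castSucc]
      by_cases h : j = i
      · subst h
        simpa only [Function.update_self] using tilde_memFq hqpos (hg j)
      · simpa only [Function.update_of_ne h] using hg j
  have hprod0 : (fun y => b y * ∏ j, g j y) = fun y => ∏ t : Fin (q+1), F0 t y := by
    funext y
    rw [Fin.prod_univ_castSucc]
    simp only [hF0, Fin.snoc_castSucc, Fin.snoc_last]
    ring
  have hprodi : ∀ i, (fun y => b y * (gt i y * ∏ j ∈ Finset.univ.erase i, g j y))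
      = fun y => ∏ t : Fin (q+1), Fi i t y := by
    intro i
    funext y
    rw [Fin.prod_univ_castSucc]
    have h2 : (∏ j : Fin q, Fi i j.castSucc y) = gt i y * ∏ j ∈ univ.erase i, g j y := by
      simp only [hFi, Fin.snoc_castSucc]
      rw [← Finset.mul_prod_erase univ (fun j => Function.update g i (gt i) j y)
          (Finset.mem_univ i)]
      congr 1
      · simp [Function.update_self]
      · apply Finset.prod_congr rfl
        intro j hj
        rw [Function.update_of_ne (Finset.mem_erase.mp hj).1]
    rw [h2]
    simp only [hFi, Fin.snoc_last]
    ring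
  -- abbreviations for the main sums
  set T0 : ℤ := ∑ a ∈ Finset.Nat.antidiagonalTuple (q+1) m,
      (Nat.multinomial Finset.univ a : ℤ) * ∏ t, Dv q (F0 t) (a t) with hT0
  set Ti : Fin q → ℤ := fun i => ∑ a ∈ Finset.Nat.antidiagonalTuple (q+1) m,
      (Nat.multinomial Finset.univ a : ℤ) * ∏ t, Dv q (Fi i t) (a t) with hTi
  have hd0 := prodFq q hq (q+1) F0 hF0mem m 0
  have hdi := fun i => prodFq q hq (q+1) (Fi i) (hFimem i) m 0
  rw [← hprod0] at hd0
  have hdi' : ∀ i : Fin q, (q:ℤ)^(m+1) ∣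
      delta^[m] (fun y => b y * (gt i y * ∏ j ∈ Finset.univ.erase i, g j y)) 0
        - (q:ℤ)^m * Ti i := by
    intro i
    rw [hprodi i]
    exact hdi i
  have hsum : delta^[m] r 0 = delta^[m] (fun y => b y * ∏ j, g j y) 0
      + ∑ i, delta^[m] (fun y => b y * (gt i y * ∏ j ∈ Finset.univ.erase i, g j y)) 0 := by
    rw [hrdec, iter_add, iter_sum]
  have hbig : (q:ℤ)^(m+1) ∣ delta^[m] r 0 - (q:ℤ)^m * (T0 + ∑ i, Ti i) := by
    rw [hsum]
    exact dvd_combo Finset.univ _ _ _ _ _ _ hd0 (fun i _ => hdi' i)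
  obtain ⟨e, he⟩ := hbig
  have hval : delta^[m] r 0 = (q:ℤ)^m * ((T0 + ∑ i, Ti i) + (q:ℤ) * e) := by
    have : delta^[m] r 0 = (q:ℤ)^m * (T0 + ∑ i, Ti i) + (q:ℤ)^(m+1) * e := by
      rw [← he]; ring
    rw [this]; ring
  have heps : epsq q r m = ((T0 + ∑ i, Ti i) + (q:ℤ) * e) % (q:ℤ) := by
    rw [epsq_eq]
    unfold Dv
    rw [hval, Int.mul_ediv_cancel_left _ (pow_ne_zero m hq0)]
  rw [heps]
  have h1 : ((T0 + ∑ i, Ti i) + (q:ℤ) * e) % (q:ℤ)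
      ≡ (T0 + ∑ i, Ti i) + (q:ℤ) * e [ZMOD (q:ℤ)] :=
    Int.emod_emod_of_dvd _ dvd_rfl
  refine h1.trans ?_
  -- restructure T0 + ∑ Ti into the shape of the goal (over ℤ, with Dv)
  have hT0' : T0 = ∑ a ∈ Finset.Nat.antidiagonalTuple (q+1) m,
      (Nat.multinomial Finset.univ a : ℤ) *
        ((∏ j : Fin q, Dv q (g j) (a j.castSucc)) * Dv q b (a (Fin.last q))) := by
    apply Finset.sum_congr rfl
    intro a _
    congr 1
    rw [Fin.prod_univ_castSucc]
    simp only [hF0, Fin.snoc_castSucc, Fin.snoc_last]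
  have hTi' : ∀ i, Ti i = ∑ a ∈ Finset.Nat.antidiagonalTuple (q+1) m,
      (Nat.multinomial Finset.univ a : ℤ) *
        ((Dv q (g i) (a i.castSucc + 1) * ∏ j ∈ univ.erase i, Dv q (g j) (a j.castSucc))
          * Dv q b (a (Fin.last q))) := by
    intro i
    apply Finset.sum_congr rfl
    intro a _
    congr 1
    rw [Fin.prod_univ_castSucc]
    simp only [hFi, Fin.snoc_castSucc, Fin.snoc_last]
    congr 1
    rw [← Finset.mul_prod_erase univ (fun j => Dv q (Function.update g i (gt i) j) (a j.castSucc))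
        (Finset.mem_univ i)]
    congr 1
    · rw [Function.update_self, hgt]
      exact tilde_Dv hqpos (hg i) _
    · apply Finset.prod_congr rfl
      intro j hj
      rw [Function.update_of_ne (Finset.mem_erase.mp hj).1]
  have hcomb : T0 + ∑ i, Ti i = ∑ a ∈ Finset.Nat.antidiagonalTuple (q+1) m,
      (Nat.multinomial Finset.univ a : ℤ) * Dv q b (a (Fin.last q)) *
        ((∏ i : Fin q, Dv q (g i) (a i.castSucc)) +
          ∑ i : Fin q, Dv q (g i) (a i.castSucc + 1) *
            ∏ j ∈ univ.erase i, Dv q (g j) (a j.castSucc)) := by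
    rw [hT0']
    have hswap : ∑ i, Ti i = ∑ a ∈ Finset.Nat.antidiagonalTuple (q+1) m, ∑ i : Fin q,
        (Nat.multinomial Finset.univ a : ℤ) *
          ((Dv q (g i) (a i.castSucc + 1) * ∏ j ∈ univ.erase i, Dv q (g j) (a j.castSucc))
            * Dv q b (a (Fin.last q))) := by
      rw [Finset.sum_congr rfl (fun i _ => hTi' i), Finset.sum_comm]
    rw [hswap, ← Finset.sum_add_distrib]
    apply Finset.sum_congr rfl
    intro a _
    rw [mul_add, Finset.mul_sum]
    congr 1
    · ring
    · apply Finset.sum_congr rfl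
      intro i _
      ring
  rw [hcomb]
  -- now pass to ZMod q
  refine (ZMod.intCast_eq_intCast_iff' _ _ q).mp ?_
  push_cast
  rw [ZMod.natCast_self]
  rw [zero_mul, add_zero]
  apply Finset.sum_congr rfl
  intro a _
  simp only [epsq_eq]
  push_cast [ZMod.intCast_mod]
  ring
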